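/- Consider the networked SAIR(S) ODE system under the stated nonnegativity assumptions on parameters and adjacency weights. If the initial conditions satisfy s_i(0), a_i(0), p_i(0), r_i(0) ∈ [0,1] and s_i(0) + a_i(0) + p_i(0) + r_i(0) = 1 for every node i, then any solution of the system satisfies, for all t ≥ 0 and all i, s_i(t), a_i(t), p_i(t), r_i(t) ∈ [0,1] and s_i(t) + a_i(t) + p_i(t) + r_i(t) = 1. -/

import Mathlib

open Set Filter Topology

lemma nsairs_barrier_no_touch {g : ℝ → ℝ} {d t : ℝ} (ht : 0 < t)
    (hg : HasDerivAt g d t) (h0 : g t = 0)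
    (hpos : ∀ τ ∈ Set.Ico (0:ℝ) t, 0 < g τ) (hd : 0 < d) : False := by
  rw [hasDerivAt_iff_tendsto_slope] at hg
  have hg' : Tendsto (slope g t) (𝓝[<] t) (𝓝 d) :=
    hg.mono_left (nhdsWithin_mono _ fun x hx => ne_of_lt hx)
  have h1 : ∀ᶠ τ in 𝓝[<] t, 0 < slope g t τ :=
    hg'.eventually (eventually_gt_nhds hd)
  have h2 : ∀ᶠ τ in 𝓝[<] t, τ ∈ Set.Ioo 0 t :=
    eventually_of_mem (Ioo_mem_nhdsLT ht) (fun x hx => hx)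
  obtain ⟨τ, hsl, hτ⟩ := (h1.and h2).exists
  rw [slope_def_field, h0, sub_zero] at hsl
  have hneg : τ - t < 0 := by linarith [hτ.2]
  rcases div_pos_iff.mp hsl with ⟨_, h⟩ | ⟨h, _⟩
  · linarith
  · exact absurd (hpos τ ⟨hτ.1.le, hτ.2⟩) (not_lt.2 h.le)

lemma nsairs_ge_of_left {g : ℝ → ℝ} {t : ℝ} (ht : 0 < t) (hc : ContinuousAt g t)
    (hpos : ∀ τ ∈ Set.Ico (0:ℝ) t, 0 ≤ g τ) : 0 ≤ g t := by
  have hten : Tendsto g (𝓝[<] t) (𝓝 (g t)) :=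
    (hc.tendsto).mono_left nhdsWithin_le_nhds
  refine ge_of_tendsto hten ?_
  exact eventually_of_mem (Ioo_mem_nhdsLT ht)
    (fun τ hτ => hpos τ ⟨hτ.1.le, hτ.2⟩)

theorem nsairs_invariance
    (n : ℕ) (s a p r : Fin n → ℝ → ℝ)
    (β γ κ σ δ : Fin n → ℝ) (W : Fin n → Fin n → ℝ) (q : ℝ)
    (hβ : ∀ i, 0 ≤ β i) (hγ : ∀ i, 0 ≤ γ i) (hκ : ∀ i, 0 ≤ κ i)
    (hσ : ∀ i, 0 ≤ σ i) (hδ : ∀ i, 0 ≤ δ i)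
    (hW : ∀ i j, 0 ≤ W i j) (hq0 : 0 ≤ q) (hq1 : q ≤ 1)
    (hs : ∀ i, ∀ t ≥ (0 : ℝ), HasDerivAt (s i)
      (-(β i) * s i t * (∑ j, W i j * (a j t + p j t)) + δ i * r i t) t)
    (ha : ∀ i, ∀ t ≥ (0 : ℝ), HasDerivAt (a i)
      (q * β i * s i t * (∑ j, W i j * (a j t + p j t)) - σ i * a i t - κ i * a i t) t)
    (hp : ∀ i, ∀ t ≥ (0 : ℝ), HasDerivAt (p i)
      ((1 - q) * β i * s i t * (∑ j, W i j * (a j t + p j t)) + σ i * a i t - γ i * p i t) t)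
    (hr : ∀ i, ∀ t ≥ (0 : ℝ), HasDerivAt (r i)
      (κ i * a i t + γ i * p i t - δ i * r i t) t)
    (h0 : ∀ i, s i 0 ∈ Set.Icc (0 : ℝ) 1 ∧ a i 0 ∈ Set.Icc (0 : ℝ) 1 ∧
      p i 0 ∈ Set.Icc (0 : ℝ) 1 ∧ r i 0 ∈ Set.Icc (0 : ℝ) 1)
    (hsum0 : ∀ i, s i 0 + a i 0 + p i 0 + r i 0 = 1) :
    ∀ t ≥ (0 : ℝ), ∀ i,
      (s i t ∈ Set.Icc (0 : ℝ) 1 ∧ a i t ∈ Set.Icc (0 : ℝ) 1 ∧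
        p i t ∈ Set.Icc (0 : ℝ) 1 ∧ r i t ∈ Set.Icc (0 : ℝ) 1) ∧
      s i t + a i t + p i t + r i t = 1 := by
  intro T hT
  -- abbreviation for the interaction sum
  set Sig : Fin n → ℝ → ℝ := fun i τ => ∑ j, W i j * (a j τ + p j τ) with hSigdef
  -- continuity on [0, T]
  have hsc : ∀ i, ContinuousOn (s i) (Icc (0:ℝ) T) := fun i τ hτ =>
    ((hs i τ hτ.1).continuousAt).continuousWithinAt
  have hac : ∀ i, ContinuousOn (a i) (Icc (0:ℝ) T) := fun i τ hτ =>
    ((ha i τ hτ.1).continuousAt).continuousWithinAt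
  have hpc : ∀ i, ContinuousOn (p i) (Icc (0:ℝ) T) := fun i τ hτ =>
    ((hp i τ hτ.1).continuousAt).continuousWithinAt
  have hrc : ∀ i, ContinuousOn (r i) (Icc (0:ℝ) T) := fun i τ hτ =>
    ((hr i τ hτ.1).continuousAt).continuousWithinAt
  have hSigc : ∀ i, ContinuousOn (Sig i) (Icc (0:ℝ) T) := by
    intro i
    exact continuousOn_finset_sum _ (fun j _ =>
      ContinuousOn.mul continuousOn_const ((hac j).add (hpc j)))
  -- a uniform bound M on everything
  obtain ⟨C, hC⟩ := (isCompact_Icc : IsCompact (Icc (0:ℝ) T)).exists_bound_of_continuousOn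
    (f := fun τ => ∑ i, (|s i τ| + |a i τ| + |p i τ| + |r i τ| + |Sig i τ|))
    (continuousOn_finset_sum _ (fun i _ =>
      ((((((hsc i).abs.add (hac i).abs)).add (hpc i).abs).add (hrc i).abs).add (hSigc i).abs)))
  set M : ℝ := max C 0 with hMdef
  have hM0 : (0:ℝ) ≤ M := le_max_right _ _
  have hbM : ∀ i, ∀ τ ∈ Icc (0:ℝ) T,
      |s i τ| ≤ M ∧ |a i τ| ≤ M ∧ |p i τ| ≤ M ∧ |r i τ| ≤ M ∧ |Sig i τ| ≤ M := by
    intro i τ hτ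
    have hsum : (|s i τ| + |a i τ| + |p i τ| + |r i τ| + |Sig i τ|)
        ≤ ∑ k, (|s k τ| + |a k τ| + |p k τ| + |r k τ| + |Sig k τ|) :=
      Finset.single_le_sum (f := fun k => |s k τ| + |a k τ| + |p k τ| + |r k τ| + |Sig k τ|)
        (fun k _ => by positivity) (Finset.mem_univ i)
    have hCb : ∑ k, (|s k τ| + |a k τ| + |p k τ| + |r k τ| + |Sig k τ|) ≤ M := by
      have := hC τ hτ
      rw [Real.norm_eq_abs] at this
      calc _ ≤ |∑ k, (|s k τ| + |a k τ| + |p k τ| + |r k τ| + |Sig k τ|)| := le_abs_self _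
        _ ≤ C := this
        _ ≤ M := le_max_left _ _
    refine ⟨?_, ?_, ?_, ?_, ?_⟩ <;>
      linarith [abs_nonneg (s i τ), abs_nonneg (a i τ), abs_nonneg (p i τ),
        abs_nonneg (r i τ), abs_nonneg (Sig i τ)]
  -- the Gronwall constant
  set L : ℝ := 1 + ∑ i, (β i * M + β i * (M + 2*M*(∑ j, W i j)) + σ i + κ i + γ i + δ i)
    with hLdef
  have hWs : ∀ i, (0:ℝ) ≤ ∑ j, W i j := fun i => Finset.sum_nonneg (fun j _ => hW i j)
  have htermnn : ∀ i, (0:ℝ) ≤ β i * M + β i * (M + 2*M*(∑ j, W i j)) + σ i + κ i + γ i + δ i := by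
    intro i
    have h1 := mul_nonneg (hβ i) hM0
    have h2 : (0:ℝ) ≤ M + 2*M*(∑ j, W i j) := by
      linarith [mul_nonneg hM0 (hWs i)]
    have h3 := mul_nonneg (hβ i) h2
    linarith [hσ i, hκ i, hγ i, hδ i]
  have hLi : ∀ i, β i * M + β i * (M + 2*M*(∑ j, W i j)) + σ i + κ i + γ i + δ i ≤ L - 1 := by
    intro i
    have := Finset.single_le_sum (fun k (_ : k ∈ Finset.univ) => htermnn k) (Finset.mem_univ i)
    rw [hLdef]; linarith
  have hL1 : (1:ℝ) ≤ L := by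
    have : (0:ℝ) ≤ ∑ i, (β i * M + β i * (M + 2*M*(∑ j, W i j)) + σ i + κ i + γ i + δ i) :=
      Finset.sum_nonneg (fun i _ => htermnn i)
    rw [hLdef]; linarith
  -- the barrier argument
  have key : ∀ ε : ℝ, 0 < ε → ∀ i,
      -(ε * Real.exp (L * T)) < s i T ∧ -(ε * Real.exp (L * T)) < a i T ∧
      -(ε * Real.exp (L * T)) < p i T ∧ -(ε * Real.exp (L * T)) < r i T := by
    intro ε hε
    set B : ℝ → ℝ := fun τ => ε * Real.exp (L * τ) with hBdef
    have hBpos : ∀ τ, 0 < B τ := fun τ => mul_pos hε (Real.exp_pos _)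
    have hBcont : Continuous B := by
      rw [hBdef]
      exact continuous_const.mul (Real.continuous_exp.comp (continuous_const.mul continuous_id))
    have hB' : ∀ τ : ℝ, HasDerivAt B (L * B τ) τ := by
      intro τ
      have h1 : HasDerivAt (fun u : ℝ => L * u) L τ := by
        simpa using (hasDerivAt_id τ).const_mul L
      have h2 := (Real.hasDerivAt_exp (L * τ)).comp τ h1
      have h3 := h2.const_mul ε
      simp only [Function.comp] at h3
      rw [hBdef]
      refine h3.congr_deriv ?_
      beta_reduce
      ring
    set Bad : Set ℝ := ⋃ i : Fin n,
      ((Icc (0:ℝ) T ∩ (fun τ => s i τ + B τ) ⁻¹' Iic 0) ∪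
       (Icc (0:ℝ) T ∩ (fun τ => a i τ + B τ) ⁻¹' Iic 0) ∪
       (Icc (0:ℝ) T ∩ (fun τ => p i τ + B τ) ⁻¹' Iic 0) ∪
       (Icc (0:ℝ) T ∩ (fun τ => r i τ + B τ) ⁻¹' Iic 0)) with hBaddef
    have hBadmem : ∀ τ, τ ∈ Bad ↔ τ ∈ Icc (0:ℝ) T ∧ ∃ i,
        (s i τ + B τ ≤ 0 ∨ a i τ + B τ ≤ 0 ∨ p i τ + B τ ≤ 0 ∨ r i τ + B τ ≤ 0) := by
      intro τ
      simp only [hBaddef, mem_iUnion, mem_union, mem_inter_iff, mem_preimage, mem_Iic]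
      constructor
      · rintro ⟨i, h⟩
        rcases h with ((⟨hm, h⟩ | ⟨hm, h⟩) | ⟨hm, h⟩) | ⟨hm, h⟩ <;> exact ⟨hm, i, by tauto⟩
      · rintro ⟨hm, i, h⟩
        exact ⟨i, by tauto⟩
    suffices hempty : Bad = ∅ by
      have hTnot : T ∉ Bad := by rw [hempty]; exact notMem_empty _
      intro i
      rw [hBadmem] at hTnot
      push_neg at hTnot
      have h4 := hTnot ⟨hT, le_rfl⟩ i
      have hBT : B T = ε * Real.exp (L * T) := rfl
      refine ⟨?_, ?_, ?_, ?_⟩ <;> [skip; skip; skip; skip] <;>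
        (first
          | (have := h4.1; rw [← hBT]; linarith)
          | (have := h4.2.1; rw [← hBT]; linarith)
          | (have := h4.2.2.1; rw [← hBT]; linarith)
          | (have := h4.2.2.2; rw [← hBT]; linarith))
    by_contra hne'
    have hne : Bad.Nonempty := nonempty_iff_ne_empty.mpr hne'
    have hclosed : IsClosed Bad := by
      rw [hBaddef]
      apply isClosed_iUnion_of_finite
      intro i
      have hc1 : ContinuousOn (fun τ => s i τ + B τ) (Icc (0:ℝ) T) :=
        (hsc i).add hBcont.continuousOn
      have hc2 : ContinuousOn (fun τ => a i τ + B τ) (Icc (0:ℝ) T) :=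
        (hac i).add hBcont.continuousOn
      have hc3 : ContinuousOn (fun τ => p i τ + B τ) (Icc (0:ℝ) T) :=
        (hpc i).add hBcont.continuousOn
      have hc4 : ContinuousOn (fun τ => r i τ + B τ) (Icc (0:ℝ) T) :=
        (hrc i).add hBcont.continuousOn
      exact (((hc1.preimage_isClosed_of_isClosed isClosed_Icc isClosed_Iic).union
        (hc2.preimage_isClosed_of_isClosed isClosed_Icc isClosed_Iic)).union
        (hc3.preimage_isClosed_of_isClosed isClosed_Icc isClosed_Iic)).union
        (hc4.preimage_isClosed_of_isClosed isClosed_Icc isClosed_Iic)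
    have hbdd : BddBelow Bad := ⟨0, fun x hx => ((hBadmem x).1 hx).1.1⟩
    set t₀ : ℝ := sInf Bad with ht₀def
    have ht₀mem : t₀ ∈ Bad := hclosed.csInf_mem hne hbdd
    obtain ⟨ht₀Icc, hi⟩ := (hBadmem t₀).1 ht₀mem
    have hB0 : B 0 = ε := by rw [hBdef]; simp
    have ht₀pos : 0 < t₀ := by
      rcases ht₀Icc.1.lt_or_eq with h | h
      · exact h
      · exfalso
        obtain ⟨i, hcase⟩ := hi
        rcases hcase with hc | hc | hc | hc
        · rw [← h, hB0] at hc; linarith [(h0 i).1.1]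
        · rw [← h, hB0] at hc; linarith [(h0 i).2.1.1]
        · rw [← h, hB0] at hc; linarith [(h0 i).2.2.1.1]
        · rw [← h, hB0] at hc; linarith [(h0 i).2.2.2.1]
    have hbefore : ∀ τ, τ ∈ Ico (0:ℝ) t₀ → ∀ k,
        0 < s k τ + B τ ∧ 0 < a k τ + B τ ∧ 0 < p k τ + B τ ∧ 0 < r k τ + B τ := by
      intro τ hτ k
      have hnb : τ ∉ Bad := notMem_of_lt_csInf hτ.2 hbdd
      rw [hBadmem] at hnb
      push_neg at hnb
      have hmem : τ ∈ Icc (0:ℝ) T := ⟨hτ.1, le_trans hτ.2.le ht₀Icc.2⟩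
      exact hnb hmem k
    have hatt : ∀ k, -B t₀ ≤ s k t₀ ∧ -B t₀ ≤ a k t₀ ∧ -B t₀ ≤ p k t₀ ∧ -B t₀ ≤ r k t₀ := by
      intro k
      have hca : ContinuousAt (fun τ => s k τ + B τ) t₀ :=
        ((hs k t₀ ht₀Icc.1).continuousAt).add hBcont.continuousAt
      have hcb : ContinuousAt (fun τ => a k τ + B τ) t₀ :=
        ((ha k t₀ ht₀Icc.1).continuousAt).add hBcont.continuousAt
      have hcc : ContinuousAt (fun τ => p k τ + B τ) t₀ :=
        ((hp k t₀ ht₀Icc.1).continuousAt).add hBcont.continuousAt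
      have hcd : ContinuousAt (fun τ => r k τ + B τ) t₀ :=
        ((hr k t₀ ht₀Icc.1).continuousAt).add hBcont.continuousAt
      refine ⟨?_, ?_, ?_, ?_⟩
      · have := nsairs_ge_of_left ht₀pos hca (fun τ hτ => (hbefore τ hτ k).1.le); linarith
      · have := nsairs_ge_of_left ht₀pos hcb (fun τ hτ => (hbefore τ hτ k).2.1.le); linarith
      · have := nsairs_ge_of_left ht₀pos hcc (fun τ hτ => (hbefore τ hτ k).2.2.1.le); linarith
      · have := nsairs_ge_of_left ht₀pos hcd (fun τ hτ => (hbefore τ hτ k).2.2.2.le); linarith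
    -- bounds at t₀
    have hBt : 0 < B t₀ := hBpos t₀
    obtain ⟨i, hcase⟩ := hi
    have habs := hbM i t₀ ht₀Icc
    have hSu : Sig i t₀ ≤ M := (abs_le.mp habs.2.2.2.2).2
    have hSd : -M ≤ Sig i t₀ := (abs_le.mp habs.2.2.2.2).1
    have hsu : s i t₀ ≤ M := (abs_le.mp habs.1).2
    have hSl : (∑ j, W i j) * (-(2 * B t₀)) ≤ Sig i t₀ := by
      have hterm : ∀ j ∈ Finset.univ, W i j * (-(2 * B t₀)) ≤ W i j * (a j t₀ + p j t₀) := by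
        intro j _
        apply mul_le_mul_of_nonneg_left _ (hW i j)
        have h1 := (hatt j).2.1
        have h2 := (hatt j).2.2.1
        linarith
      calc (∑ j, W i j) * (-(2 * B t₀)) = ∑ j, W i j * (-(2 * B t₀)) := by
            rw [Finset.sum_mul]
        _ ≤ ∑ j, W i j * (a j t₀ + p j t₀) := Finset.sum_le_sum hterm
        _ = Sig i t₀ := by rw [hSigdef]
    have hsS : -(B t₀ * (M + 2*M*(∑ j, W i j))) ≤ s i t₀ * Sig i t₀ := by
      rcases le_or_gt 0 (Sig i t₀) with h | h
      · linarith [mul_nonneg (by linarith [(hatt i).1] : (0:ℝ) ≤ s i t₀ + B t₀) h,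
          mul_nonneg (mul_nonneg hM0 (hWs i)) hBt.le,
          mul_nonneg hBt.le (by linarith : (0:ℝ) ≤ M - Sig i t₀)]
      · linarith [mul_nonpos_of_nonneg_of_nonpos (by linarith : (0:ℝ) ≤ M - s i t₀) h.le,
          mul_le_mul_of_nonneg_left hSl hM0, mul_nonneg hM0 hBt.le]
    have hKnn : (0:ℝ) ≤ M + 2*M*(∑ j, W i j) := by linarith [mul_nonneg hM0 (hWs i)]
    have hKB : (0:ℝ) ≤ B t₀ * (M + 2*M*(∑ j, W i j)) := mul_nonneg hBt.le hKnn
    have hLK : β i * (B t₀ * (M + 2*M*(∑ j, W i j))) ≤ (L - 1) * B t₀ := by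
      have h1 : β i * (M + 2*M*(∑ j, W i j)) ≤ L - 1 := by
        linarith [hLi i, mul_nonneg (hβ i) hM0, hσ i, hκ i, hγ i, hδ i]
      linarith [mul_le_mul_of_nonneg_right h1 hBt.le]
    rcases hcase with hc | hc | hc | hc
    · -- s touches the barrier
      have heq : s i t₀ + B t₀ = 0 := le_antisymm hc (by linarith [(hatt i).1])
      have hseq : s i t₀ = -B t₀ := by linarith
      refine nsairs_barrier_no_touch (g := fun τ => s i τ + B τ) ht₀pos
        ((hs i t₀ ht₀Icc.1).add (hB' t₀)) heq (fun τ hτ => (hbefore τ hτ i).1) ?_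
      rw [hseq]
      have hLs : β i * M + δ i ≤ L - 1 := by
        linarith [hLi i, mul_nonneg (hβ i) hKnn, hσ i, hκ i, hγ i]
      linarith [mul_nonneg (mul_nonneg (hβ i) hBt.le) (by linarith : (0:ℝ) ≤ Sig i t₀ + M),
        mul_nonneg (hδ i) (by linarith [(hatt i).2.2.2] : (0:ℝ) ≤ r i t₀ + B t₀),
        mul_nonneg (by linarith : (0:ℝ) ≤ L - 1 - β i * M - δ i) hBt.le, hBt]
    · -- a touches the barrier
      have heq : a i t₀ + B t₀ = 0 := le_antisymm hc (by linarith [(hatt i).2.1])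
      have haeq : a i t₀ = -B t₀ := by linarith
      refine nsairs_barrier_no_touch (g := fun τ => a i τ + B τ) ht₀pos
        ((ha i t₀ ht₀Icc.1).add (hB' t₀)) heq (fun τ hτ => (hbefore τ hτ i).2.1) ?_
      rw [haeq]
      have h1 : q * β i * (-(B t₀ * (M + 2*M*(∑ j, W i j)))) ≤ q * β i * (s i t₀ * Sig i t₀) :=
        mul_le_mul_of_nonneg_left hsS (mul_nonneg hq0 (hβ i))
      have h2 : q * β i * (B t₀ * (M + 2*M*(∑ j, W i j))) ≤
          β i * (B t₀ * (M + 2*M*(∑ j, W i j))) := by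
        linarith [mul_nonneg (mul_nonneg (by linarith : (0:ℝ) ≤ 1 - q) (hβ i)) hKB]
      linarith [h1, h2, hLK, mul_nonneg (hσ i) hBt.le, mul_nonneg (hκ i) hBt.le, hBt]
    · -- p touches the barrier
      have heq : p i t₀ + B t₀ = 0 := le_antisymm hc (by linarith [(hatt i).2.2.1])
      have hpeq : p i t₀ = -B t₀ := by linarith
      refine nsairs_barrier_no_touch (g := fun τ => p i τ + B τ) ht₀pos
        ((hp i t₀ ht₀Icc.1).add (hB' t₀)) heq (fun τ hτ => (hbefore τ hτ i).2.2.1) ?_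
      rw [hpeq]
      have h1 : (1-q) * β i * (-(B t₀ * (M + 2*M*(∑ j, W i j)))) ≤
          (1-q) * β i * (s i t₀ * Sig i t₀) :=
        mul_le_mul_of_nonneg_left hsS (mul_nonneg (by linarith) (hβ i))
      have h2 : (1-q) * β i * (B t₀ * (M + 2*M*(∑ j, W i j))) ≤
          β i * (B t₀ * (M + 2*M*(∑ j, W i j))) := by
        linarith [mul_nonneg (mul_nonneg hq0 (hβ i)) hKB]
      have h3 : -(σ i * B t₀) ≤ σ i * a i t₀ := by
        linarith [mul_le_mul_of_nonneg_left (hatt i).2.1 (hσ i)]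
      have h4 : σ i * B t₀ ≤ (L - 1) * B t₀ - β i * (B t₀ * (M + 2*M*(∑ j, W i j))) := by
        have h5 : β i * (M + 2*M*(∑ j, W i j)) + σ i ≤ L - 1 := by
          linarith [hLi i, mul_nonneg (hβ i) hM0, hκ i, hγ i, hδ i]
        linarith [mul_le_mul_of_nonneg_right h5 hBt.le]
      linarith [h1, h2, h3, h4, mul_nonneg (hγ i) hBt.le, hBt]
    · -- r touches the barrier
      have heq : r i t₀ + B t₀ = 0 := le_antisymm hc (by linarith [(hatt i).2.2.2])
      have hreq : r i t₀ = -B t₀ := by linarith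
      refine nsairs_barrier_no_touch (g := fun τ => r i τ + B τ) ht₀pos
        ((hr i t₀ ht₀Icc.1).add (hB' t₀)) heq (fun τ hτ => (hbefore τ hτ i).2.2.2) ?_
      rw [hreq]
      have hLr : κ i + γ i ≤ L - 1 := by
        linarith [hLi i, mul_nonneg (hβ i) hM0, mul_nonneg (hβ i) hKnn, hσ i, hδ i]
      linarith [mul_nonneg (hκ i) (by linarith [(hatt i).2.1] : (0:ℝ) ≤ a i t₀ + B t₀),
        mul_nonneg (hγ i) (by linarith [(hatt i).2.2.1] : (0:ℝ) ≤ p i t₀ + B t₀),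
        mul_nonneg (by linarith : (0:ℝ) ≤ L - 1 - κ i - γ i) hBt.le, hBt,
        mul_nonneg (hδ i) hBt.le]
  -- nonnegativity at T
  have hnn : ∀ i, 0 ≤ s i T ∧ 0 ≤ a i T ∧ 0 ≤ p i T ∧ 0 ≤ r i T := by
    intro i
    have key' : ∀ x : ℝ, (∀ ε : ℝ, 0 < ε → -(ε * Real.exp (L * T)) < x) → 0 ≤ x := by
      intro x hx
      by_contra hneg
      push_neg at hneg
      have hε : 0 < -x / Real.exp (L * T) := div_pos (by linarith) (Real.exp_pos _)
      have := hx _ hε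
      rw [div_mul_cancel₀ _ (Real.exp_ne_zero (L * T))] at this
      linarith
    exact ⟨key' _ (fun ε hε => (key ε hε i).1), key' _ (fun ε hε => (key ε hε i).2.1),
      key' _ (fun ε hε => (key ε hε i).2.2.1), key' _ (fun ε hε => (key ε hε i).2.2.2)⟩
  -- the total is conserved
  have hsum : ∀ i, s i T + a i T + p i T + r i T = 1 := by
    intro i
    have hcont : ContinuousOn (fun τ => s i τ + a i τ + p i τ + r i τ) (Icc (0:ℝ) T) :=
      (((hsc i).add (hac i)).add (hpc i)).add (hrc i)
    have hder : ∀ τ ∈ Ico (0:ℝ) T,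
        HasDerivWithinAt (fun τ => s i τ + a i τ + p i τ + r i τ) 0 (Ici τ) τ := by
      intro τ hτ
      have h := (((hs i τ hτ.1).add (ha i τ hτ.1)).add (hp i τ hτ.1)).add (hr i τ hτ.1)
      have h' : HasDerivAt (fun τ => s i τ + a i τ + p i τ + r i τ) 0 τ := by
        refine h.congr_deriv ?_; ring
      exact h'.hasDerivWithinAt
    have := constant_of_has_deriv_right_zero hcont hder T ⟨hT, le_rfl⟩
    rw [this]
    exact hsum0 i
  -- conclude
  intro i
  obtain ⟨h1, h2, h3, h4⟩ := hnn i
  have h5 := hsum i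
  refine ⟨⟨⟨h1, by linarith⟩, ⟨h2, by linarith⟩, ⟨h3, by linarith⟩, ⟨h4, by linarith⟩⟩, h5⟩
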